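/- Let C₀ and C be compact subsets of Y and let U be a connected component of Y ∖ J·C. Assume that J is co-semistable at infinity in U with respect to C₀, meaning: for every J-bounded proper ray r with image in U, every loop α : [0,1] → U with α(0) = α(1) = r(0), and every compact D ⊆ Y, there exist n ≥ 0 and a continuous map H : [0,1] × [0,n] → Y with image in Y ∖ C₀ such that H(t,0) = α(t) for all t, H(0,s) = H(1,s) = r(s) for all s ∈ [0,n], and H(t,n) ∈ Y ∖ D for all t. Then for every compact F ⊆ Y and all J-bounded proper rays s₁, s₂ with images in U, with s₁(0) = s₂(0), which converge to the same end of U, there exist n ≥ 0 and a path β : [0,1] → Y ∖ F from s₁(n) to s₂(n) such that the concatenated loop s₁|[0,n] · β · (s₂|[0,n])⁻¹ is null-homotopic in Y ∖ C₀. -/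

import Mathlib

open Pointwise

/-- `U` is a connected component of the subspace `F` (of the ambient space `X`). -/
def IsComponentOf {X : Type*} [TopologicalSpace X] (F U : Set X) : Prop :=
  ∃ x ∈ F, U = connectedComponentIn F x

/-- For `A ⊆ Y`, `orbitUnion J A` is `J·A = ⋃_{j ∈ J} j • A`. -/
def orbitUnion (J : Type*) {Y : Type*} [SMul J Y] (A : Set Y) : Set Y :=
  ⋃ j : J, j • A

/-- A subset of `Y` is `J`-bounded if it is contained in `J·D` for some compact `D ⊆ Y`. -/
def JBounded (J : Type*) {Y : Type*} [TopologicalSpace Y] [SMul J Y] (S : Set Y) : Prop :=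
  ∃ D : Set Y, IsCompact D ∧ S ⊆ orbitUnion J D

/-- The loop `r|[0,a] · β · (s|[0,b])⁻¹` (parametrized on `[0,1]`): traverse `r` from
`r 0` to `r a`, then the path `β` (parametrized on `[0,1]`), then `s` backwards from
`s b` to `s 0`.  Here the rays `r, s` have domain `[0,∞)`, modelled by `ℝ≥0`. -/
noncomputable def concatLoop {Y : Type*} (r s : NNReal → Y) (a b : NNReal)
    (β : ℝ → Y) : ℝ → Y := fun t =>
  if t ≤ 1 / 3 then r (a * Real.toNNReal (3 * t))
  else if t ≤ 2 / 3 then β (3 * t - 1)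
  else s (b * Real.toNNReal (3 - 3 * t))

/-- A loop `γ` (parametrized on `[0,1]`) is null-homotopic in `S ⊆ Y` if it extends to a
continuous map of the disk with image in `S`, i.e. there is a continuous map of the square
into `S` which restricts to `γ` on the bottom edge, is constant on the top edge, and agrees
on the two vertical edges. -/
def NullHomotopicIn {Y : Type*} [TopologicalSpace Y] (γ : ℝ → Y) (S : Set Y) : Prop :=
  ∃ H : ℝ × ℝ → Y,
    ContinuousOn H (Set.Icc 0 1 ×ˢ Set.Icc 0 1) ∧
    H '' (Set.Icc 0 1 ×ˢ Set.Icc 0 1) ⊆ S ∧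
    (∀ t ∈ Set.Icc (0 : ℝ) 1, H (t, 0) = γ t) ∧
    (∀ t ∈ Set.Icc (0 : ℝ) 1, H (t, 1) = H (0, 1)) ∧
    (∀ u ∈ Set.Icc (0 : ℝ) 1, H (0, u) = H (1, u))

open Set
set_option maxHeartbeats 2000000

-- gluing on a closed union
lemma glueClosed {X Z : Type*} [TopologicalSpace X] [TopologicalSpace Z] {f : X → Z}
    {s t : Set X} (hs : IsClosed s) (ht : IsClosed t)
    (hfs : ContinuousOn f s) (hft : ContinuousOn f t) : ContinuousOn f (s ∪ t) := by
  intro x hx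
  have hcs : ContinuousWithinAt f s x := by
    by_cases h : x ∈ s
    · exact hfs x h
    · exact continuousWithinAt_of_notMem_closure (by rwa [hs.closure_eq])
  have hct : ContinuousWithinAt f t x := by
    by_cases h : x ∈ t
    · exact hft x h
    · exact continuousWithinAt_of_notMem_closure (by rwa [ht.closure_eq])
  exact hcs.union hct

-- gluing piecewise functions on Icc
lemma glueIcc {Z : Type*} [TopologicalSpace Z] {f g : ℝ → Z} {lo c hi : ℝ}
    (hf : ContinuousOn f (Icc lo c)) (hg : ContinuousOn g (Icc c hi))
    (hfg : f c = g c) :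
    ContinuousOn (fun t => if t ≤ c then f t else g t) (Icc lo hi) := by
  apply ContinuousOn.if
  · intro a ha
    have : frontier {a : ℝ | a ≤ c} = {c} := by
      have : {a : ℝ | a ≤ c} = Iic c := rfl
      rw [this, frontier_Iic]
    rw [this] at ha
    have : a = c := ha.2
    rw [this, hfg]
  · apply hf.mono
    intro x hx
    have h1 : closure {a : ℝ | a ≤ c} = Iic c := by
      have : {a : ℝ | a ≤ c} = Iic c := rfl
      rw [this, closure_Iic]
    rw [h1] at hx
    exact ⟨hx.1.1, hx.2⟩
  · apply hg.mono
    intro x hx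
    have h1 : closure {a : ℝ | ¬ a ≤ c} = Ici c := by
      have : {a : ℝ | ¬ a ≤ c} = Ioi c := by ext y; exact not_le
      rw [this, closure_Ioi]
    rw [h1] at hx
    exact ⟨hx.2, hx.1.2⟩

lemma cmulNN (c : NNReal) (x : ℝ) : Real.toNNReal ((c : ℝ) * x) = c * Real.toNNReal x := by
  rw [Real.toNNReal_mul c.coe_nonneg, Real.toNNReal_coe]

lemma addtoNN (c : NNReal) (x : ℝ) (h : (c : ℝ) ≤ x) :
    c + Real.toNNReal (x - c) = Real.toNNReal x := by
  have h0 : (0:ℝ) ≤ x := le_trans c.coe_nonneg h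
  ext
  push_cast [Real.coe_toNNReal _ (by linarith : (0:ℝ) ≤ x - c), Real.coe_toNNReal _ h0]
  ring

open Set

noncomputable def alphaFn {Y : Type*} (s₁ s₂ : NNReal → Y) (γ : ℝ → Y) (a b : NNReal) :
    ℝ → Y := fun t =>
  if t ≤ 1/3 then γ (3*t)
  else if t ≤ 2/3 then s₂ (b * Real.toNNReal (2 - 3*t))
  else s₁ (a * Real.toNNReal (3*t - 2))

noncomputable def betaFn {Y : Type*} (S : ℝ × ℝ → Y) (s₂ : NNReal → Y) (γ : ℝ → Y)
    (m' b n : ℝ) : ℝ → Y := fun q =>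
  if q ≤ 1/4 then S (1 - 4*q, m')
  else if q ≤ 1/2 then S (0, m' * (2 - 4*q))
  else if q ≤ 3/4 then γ (4*q - 2)
  else s₂ (Real.toNNReal (b + (4*q - 3) * (n - b)))

noncomputable def phiFn {Y : Type*} (S : ℝ × ℝ → Y) (s₂ : NNReal → Y) (b n : ℝ) :
    ℝ × ℝ → Y := fun p =>
  if 0 ≤ p.2 then S (p.1 + 1, p.2) else s₂ (Real.toNNReal (b - p.2 * (n - b)))

noncomputable def ellFn (a b n m' : ℝ) : ℝ → ℝ × ℝ := fun t =>
  if t ≤ a/(3*n) then (n*t/a - 1/3, 0)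
  else if t ≤ 1/3 then (0, 3*n*t - a)
  else if t ≤ 5/12 then (-4*(3*t-1), m')
  else if t ≤ 1/2 then (-1, m' * (6 - 12*t))
  else if t ≤ 7/12 then (4*t - 3, 0)
  else if t ≤ 2/3 then (-2/3, 7 - 12*t)
  else if t ≤ 1 - b/(3*n) then (-2/3, (b - n*(3 - 3*t))/(n - b))
  else (-n*(1-t)/b - 1/3, 0)

def msetFn (m' : ℝ) : Set (ℝ × ℝ) :=
  (Icc (-1:ℝ) 0 ×ˢ Icc (0:ℝ) m') ∪ ({(-2/3:ℝ)} ×ˢ Icc (-1:ℝ) 0)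

lemma phi_pos {Y : Type*} (S : ℝ × ℝ → Y) (s₂ : NNReal → Y) (b n x y : ℝ)
    (hy : 0 ≤ y) : phiFn S s₂ b n (x, y) = S (x + 1, y) := if_pos hy

lemma phi_neg {Y : Type*} (S : ℝ × ℝ → Y) (s₂ : NNReal → Y) (b n x y : ℝ)
    (hy : y < 0) : phiFn S s₂ b n (x, y) = s₂ (Real.toNNReal (b - y * (n - b))) :=
  if_neg (not_le.mpr hy)

lemma concat_eval1 {Y : Type*} (r s : NNReal → Y) (a b : NNReal) (β : ℝ → Y) (t : ℝ)
    (h : t ≤ 1/3) : concatLoop r s a b β t = r (a * Real.toNNReal (3 * t)) := by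
  unfold concatLoop; rw [if_pos (by norm_num at h ⊢; linarith : t ≤ 1 / 3)]

lemma concat_eval2 {Y : Type*} (r s : NNReal → Y) (a b : NNReal) (β : ℝ → Y) (t : ℝ)
    (h1 : ¬ t ≤ 1/3) (h2 : t ≤ 2/3) : concatLoop r s a b β t = β (3 * t - 1) := by
  unfold concatLoop
  rw [if_neg (by norm_num at h1 ⊢; linarith : ¬ t ≤ 1 / 3),
    if_pos (by norm_num at h2 ⊢; linarith : t ≤ 2 / 3)]

lemma concat_eval3 {Y : Type*} (r s : NNReal → Y) (a b : NNReal) (β : ℝ → Y) (t : ℝ)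
    (h1 : ¬ t ≤ 1/3) (h2 : ¬ t ≤ 2/3) :
    concatLoop r s a b β t = s (b * Real.toNNReal (3 - 3 * t)) := by
  unfold concatLoop
  rw [if_neg (by norm_num at h1 ⊢; linarith : ¬ t ≤ 1 / 3),
    if_neg (by norm_num at h2 ⊢; linarith : ¬ t ≤ 2 / 3)]

lemma mem_prodIcc {x y lo1 hi1 lo2 hi2 : ℝ} (h1 : lo1 ≤ x) (h2 : x ≤ hi1)
    (h3 : lo2 ≤ y) (h4 : y ≤ hi2) :
    (x, y) ∈ Set.Icc lo1 hi1 ×ˢ Set.Icc lo2 hi2 := ⟨⟨h1, h2⟩, ⟨h3, h4⟩⟩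

lemma mem_mset_rect {m' x y : ℝ} (hx : -1 ≤ x) (hx' : x ≤ 0) (hy : 0 ≤ y) (hy' : y ≤ m') :
    (x, y) ∈ msetFn m' := Or.inl ⟨⟨hx, hx'⟩, ⟨hy, hy'⟩⟩

lemma mem_mset_wh {m' y : ℝ} (hy : -1 ≤ y) (hy' : y ≤ 0) :
    ((-2/3 : ℝ), y) ∈ msetFn m' := Or.inr ⟨rfl, hy, hy'⟩

lemma beta_eval1 {Y : Type*} (S : ℝ × ℝ → Y) (s₂ : NNReal → Y) (γ : ℝ → Y)
    (m' b n q : ℝ) (h : q ≤ 1/4) : betaFn S s₂ γ m' b n q = S (1 - 4*q, m') := if_pos h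

lemma beta_eval2 {Y : Type*} (S : ℝ × ℝ → Y) (s₂ : NNReal → Y) (γ : ℝ → Y)
    (m' b n q : ℝ) (h1 : ¬ q ≤ 1/4) (h2 : q ≤ 1/2) :
    betaFn S s₂ γ m' b n q = S (0, m' * (2 - 4*q)) := by
  unfold betaFn; rw [if_neg h1, if_pos h2]

lemma beta_eval3 {Y : Type*} (S : ℝ × ℝ → Y) (s₂ : NNReal → Y) (γ : ℝ → Y)
    (m' b n q : ℝ) (h1 : ¬ q ≤ 1/4) (h2 : ¬ q ≤ 1/2) (h3 : q ≤ 3/4) :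
    betaFn S s₂ γ m' b n q = γ (4*q - 2) := by
  unfold betaFn; rw [if_neg h1, if_neg h2, if_pos h3]

lemma beta_eval4 {Y : Type*} (S : ℝ × ℝ → Y) (s₂ : NNReal → Y) (γ : ℝ → Y)
    (m' b n q : ℝ) (h1 : ¬ q ≤ 1/4) (h2 : ¬ q ≤ 1/2) (h3 : ¬ q ≤ 3/4) :
    betaFn S s₂ γ m' b n q = s₂ (Real.toNNReal (b + (4*q - 3) * (n - b))) := by
  unfold betaFn; rw [if_neg h1, if_neg h2, if_neg h3]

lemma ell_eval1 {a b n m' t : ℝ} (h : t ≤ a/(3*n)) :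
    ellFn a b n m' t = (n*t/a - 1/3, 0) := if_pos h

lemma ell_eval2 {a b n m' t : ℝ} (h1 : ¬ t ≤ a/(3*n)) (h2 : t ≤ 1/3) :
    ellFn a b n m' t = (0, 3*n*t - a) := by
  unfold ellFn; rw [if_neg h1, if_pos h2]

lemma ell_eval3 {a b n m' t : ℝ} (h1 : ¬ t ≤ a/(3*n)) (h2 : ¬ t ≤ 1/3) (h3 : t ≤ 5/12) :
    ellFn a b n m' t = (-4*(3*t-1), m') := by
  unfold ellFn; rw [if_neg h1, if_neg h2, if_pos h3]

lemma ell_eval4 {a b n m' t : ℝ} (h1 : ¬ t ≤ a/(3*n)) (h2 : ¬ t ≤ 1/3) (h3 : ¬ t ≤ 5/12)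
    (h4 : t ≤ 1/2) : ellFn a b n m' t = (-1, m' * (6 - 12*t)) := by
  unfold ellFn; rw [if_neg h1, if_neg h2, if_neg h3, if_pos h4]

lemma ell_eval5 {a b n m' t : ℝ} (h1 : ¬ t ≤ a/(3*n)) (h2 : ¬ t ≤ 1/3) (h3 : ¬ t ≤ 5/12)
    (h4 : ¬ t ≤ 1/2) (h5 : t ≤ 7/12) : ellFn a b n m' t = (4*t - 3, 0) := by
  unfold ellFn; rw [if_neg h1, if_neg h2, if_neg h3, if_neg h4, if_pos h5]

lemma ell_eval6 {a b n m' t : ℝ} (h1 : ¬ t ≤ a/(3*n)) (h2 : ¬ t ≤ 1/3) (h3 : ¬ t ≤ 5/12)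
    (h4 : ¬ t ≤ 1/2) (h5 : ¬ t ≤ 7/12) (h6 : t ≤ 2/3) :
    ellFn a b n m' t = (-2/3, 7 - 12*t) := by
  unfold ellFn; rw [if_neg h1, if_neg h2, if_neg h3, if_neg h4, if_neg h5, if_pos h6]

lemma ell_eval7 {a b n m' t : ℝ} (h1 : ¬ t ≤ a/(3*n)) (h2 : ¬ t ≤ 1/3) (h3 : ¬ t ≤ 5/12)
    (h4 : ¬ t ≤ 1/2) (h5 : ¬ t ≤ 7/12) (h6 : ¬ t ≤ 2/3) (h7 : t ≤ 1 - b/(3*n)) :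
    ellFn a b n m' t = (-2/3, (b - n*(3 - 3*t))/(n - b)) := by
  unfold ellFn
  rw [if_neg h1, if_neg h2, if_neg h3, if_neg h4, if_neg h5, if_neg h6, if_pos h7]

lemma ell_eval8 {a b n m' t : ℝ} (h1 : ¬ t ≤ a/(3*n)) (h2 : ¬ t ≤ 1/3) (h3 : ¬ t ≤ 5/12)
    (h4 : ¬ t ≤ 1/2) (h5 : ¬ t ≤ 7/12) (h6 : ¬ t ≤ 2/3) (h7 : ¬ t ≤ 1 - b/(3*n)) :
    ellFn a b n m' t = (-n*(1-t)/b - 1/3, 0) := by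
  unfold ellFn
  rw [if_neg h1, if_neg h2, if_neg h3, if_neg h4, if_neg h5, if_neg h6, if_neg h7]

theorem stmt13 {Y : Type*} [TopologicalSpace Y] [ConnectedSpace Y]
    [LocallyCompactSpace Y] [LocallyConnectedSpace Y] [T2Space Y]
    {J : Type*} [Group J] [MulAction J Y]
    (hcont : ∀ j : J, Continuous fun y : Y => j • y)
    (hpd : ∀ K : Set Y, IsCompact K → {j : J | ((j • K) ∩ K).Nonempty}.Finite)
    (C₀ C : Set Y) (hC₀ : IsCompact C₀) (hC : IsCompact C)
    (U : Set Y) (hU : IsComponentOf (orbitUnion J C)ᶜ U)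
    -- `J` is co-semistable at infinity in `U` with respect to `C₀`:
    (hco : ∀ r : NNReal → Y, IsProperMap r → JBounded J (Set.range r) →
      Set.range r ⊆ U →
      ∀ α : ℝ → Y, ContinuousOn α (Set.Icc 0 1) → α '' Set.Icc 0 1 ⊆ U →
        α 0 = r 0 → α 1 = r 0 →
      ∀ D : Set Y, IsCompact D →
        ∃ (n : NNReal) (H : ℝ × ℝ → Y),
          ContinuousOn H (Set.Icc 0 1 ×ˢ Set.Icc 0 (n : ℝ)) ∧
          H '' (Set.Icc 0 1 ×ˢ Set.Icc 0 (n : ℝ)) ⊆ C₀ᶜ ∧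
          (∀ t ∈ Set.Icc (0 : ℝ) 1, H (t, 0) = α t) ∧
          (∀ s ∈ Set.Icc (0 : ℝ) (n : ℝ),
            H (0, s) = r s.toNNReal ∧ H (1, s) = r s.toNNReal) ∧
          (∀ t ∈ Set.Icc (0 : ℝ) 1, H (t, (n : ℝ)) ∈ Dᶜ)) :
    ∀ F : Set Y, IsCompact F →
    ∀ s₁ s₂ : NNReal → Y, IsProperMap s₁ → IsProperMap s₂ →
      JBounded J (Set.range s₁) → JBounded J (Set.range s₂) →
      Set.range s₁ ⊆ U → Set.range s₂ ⊆ U → s₁ 0 = s₂ 0 →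
      -- `s₁` and `s₂` converge to the same end of `U`:
      (∀ K : Set Y, IsCompact K → ∃ (a b : NNReal) (γ : ℝ → Y),
        ContinuousOn γ (Set.Icc 0 1) ∧ γ '' Set.Icc 0 1 ⊆ U \ K ∧
        γ 0 = s₁ a ∧ γ 1 = s₂ b) →
      ∃ (n : NNReal) (β : ℝ → Y),
        ContinuousOn β (Set.Icc 0 1) ∧ β '' Set.Icc 0 1 ⊆ Fᶜ ∧
        β 0 = s₁ n ∧ β 1 = s₂ n ∧
        NullHomotopicIn (concatLoop s₁ s₂ n n β) C₀ᶜ := by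
  intro F hF s₁ s₂ hp1 hp2 hjb1 hjb2 hr1 hr2 h12 hends
  -- every J-bounded proper ray in U avoids C₀
  have haux : ∀ s : NNReal → Y, IsProperMap s → JBounded J (Set.range s) →
      Set.range s ⊆ U → ∀ x : NNReal, s x ∉ C₀ := by
    intro s hps hjb hrU x
    obtain ⟨m, S, hSc, hSim, hSbot, hSside, hStop⟩ :=
      hco s hps hjb hrU (fun _ => s 0) continuousOn_const
        (by rintro y ⟨t, _, rfl⟩; exact hrU (Set.mem_range_self 0)) rfl rfl
        (C₀ ∪ s '' Set.Icc 0 x) (hC₀.union (isCompact_Icc.image hps.continuous))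
    have hxm : x ≤ m := by
      have h1 : S (0, (m:ℝ)) = s m := by
        have := (hSside (m:ℝ) ⟨m.coe_nonneg, le_refl _⟩).1
        rwa [Real.toNNReal_coe] at this
      have h2 := hStop 0 (by constructor <;> norm_num)
      rw [h1] at h2
      by_contra hc
      push_neg at hc
      exact h2 (Or.inr ⟨m, ⟨zero_le, hc.le⟩, rfl⟩)
    have h3 : S (0, (x:ℝ)) = s x := by
      have := (hSside (x:ℝ) ⟨x.coe_nonneg, by exact_mod_cast hxm⟩).1
      rwa [Real.toNNReal_coe] at this
    have h4 : S (0, (x:ℝ)) ∈ C₀ᶜ := by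
      apply hSim
      exact ⟨(0, (x:ℝ)), ⟨⟨le_refl _, by norm_num⟩, ⟨x.coe_nonneg, by exact_mod_cast hxm⟩⟩, rfl⟩
    rw [h3] at h4
    exact h4
  -- bound beyond which the rays avoid F
  obtain ⟨N₁, hN₁⟩ : BddAbove (s₁ ⁻¹' F) := (hp1.isCompact_preimage hF).bddAbove
  obtain ⟨N₂, hN₂⟩ : BddAbove (s₂ ⁻¹' F) := (hp2.isCompact_preimage hF).bddAbove
  set N : NNReal := N₁ ⊔ N₂ with hNdef
  have hNF1 : ∀ x : NNReal, N < x → s₁ x ∉ F := by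
    intro x hx hmem
    exact absurd (le_trans (hN₁ hmem) le_sup_left) (not_le.mpr hx)
  have hNF2 : ∀ x : NNReal, N < x → s₂ x ∉ F := by
    intro x hx hmem
    exact absurd (le_trans (hN₂ hmem) le_sup_right) (not_le.mpr hx)
  -- apply the same-end hypothesis
  have hK : IsCompact (F ∪ (s₁ '' Set.Icc 0 N ∪ s₂ '' Set.Icc 0 N)) :=
    hF.union ((isCompact_Icc.image hp1.continuous).union (isCompact_Icc.image hp2.continuous))
  obtain ⟨a, b, γ, hγc, hγs, hγ0, hγ1⟩ := hends _ hK
  have hγmem : ∀ w : ℝ, w ∈ Set.Icc (0:ℝ) 1 → γ w ∈ U \ (F ∪ (s₁ '' Set.Icc 0 N ∪ s₂ '' Set.Icc 0 N)) :=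
    fun w hw => hγs ⟨w, hw, rfl⟩
  have hNa : N < a := by
    by_contra h
    push_neg at h
    have h1 := hγmem 0 (by constructor <;> norm_num)
    rw [hγ0] at h1
    exact h1.2 (Or.inr (Or.inl ⟨a, ⟨zero_le, h⟩, rfl⟩))
  have hNb : N < b := by
    by_contra h
    push_neg at h
    have h1 := hγmem 1 (by constructor <;> norm_num)
    rw [hγ1] at h1
    exact h1.2 (Or.inr (Or.inr ⟨b, ⟨zero_le, h⟩, rfl⟩))
  have ha0 : 0 < a := lt_of_le_of_lt (zero_le : (0:NNReal) ≤ N) hNa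
  have hb0 : 0 < b := lt_of_le_of_lt (zero_le : (0:NNReal) ≤ N) hNb
  -- the shifted ray
  set r : NNReal → Y := fun x => s₁ (a + x) with hrdef
  have hradd : IsProperMap (fun x : NNReal => a + x) := by
    rw [isProperMap_iff_isCompact_preimage]
    refine ⟨by fun_prop, fun K hK => ?_⟩
    obtain ⟨c, hc⟩ := hK.bddAbove
    refine IsCompact.of_isClosed_subset (isCompact_Icc : IsCompact (Set.Icc 0 c))
      (hK.isClosed.preimage (by fun_prop)) ?_
    intro x hx
    exact ⟨zero_le, le_trans le_add_self (hc hx)⟩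
  have hrp : IsProperMap r := hp1.comp hradd
  have hrrange : Set.range r ⊆ Set.range s₁ := by
    rintro y ⟨x, rfl⟩; exact Set.mem_range_self _
  have hrjb : JBounded J (Set.range r) := by
    obtain ⟨Dd, hDd, hsub⟩ := hjb1
    exact ⟨Dd, hDd, hrrange.trans hsub⟩
  have hrU : Set.range r ⊆ U := hrrange.trans hr1
  -- the loop α
  set α : ℝ → Y := alphaFn s₁ s₂ γ a b with hαdef
  have hs₂c : Continuous s₂ := hp2.continuous
  have hs₁c : Continuous s₁ := hp1.continuous
  have hαc : ContinuousOn α (Set.Icc 0 1) := by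
    rw [hαdef]; unfold alphaFn
    apply glueIcc (c := 1/3) (lo := 0) (hi := 1)
    · apply hγc.comp (by fun_prop : Continuous fun t : ℝ => 3*t).continuousOn
      intro x hx
      simp only [Set.mem_Icc] at hx ⊢
      constructor <;> linarith [hx.1, hx.2]
    · apply glueIcc (c := 2/3) (lo := 1/3) (hi := 1)
      · exact (Continuous.continuousOn
          (hs₂c.comp (continuous_const.mul (continuous_real_toNNReal.comp (by fun_prop)))))
      · exact (Continuous.continuousOn
          (hs₁c.comp (continuous_const.mul (continuous_real_toNNReal.comp (by fun_prop)))))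
      · norm_num [Real.toNNReal_zero, h12]
    · rw [if_pos (by norm_num : (1:ℝ)/3 ≤ 2/3)]
      norm_num [hγ1, Real.toNNReal_one]
  have hαim : α '' Set.Icc 0 1 ⊆ U := by
    rintro y ⟨t, ht, rfl⟩
    rw [hαdef]; unfold alphaFn
    split_ifs with h1 h2
    · exact (hγmem (3*t) ⟨by linarith [ht.1], by linarith⟩).1
    · exact hr2 (Set.mem_range_self _)
    · exact hr1 (Set.mem_range_self _)
  have hr0 : r 0 = s₁ a := by rw [hrdef]; simp
  have hα0 : α 0 = r 0 := by
    rw [hαdef]; unfold alphaFn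
    rw [if_pos (by norm_num : (0:ℝ) ≤ 1/3)]
    rw [hr0]
    norm_num [hγ0]
  have hα1 : α 1 = r 0 := by
    rw [hαdef]; unfold alphaFn
    rw [if_neg (by norm_num : ¬ (1:ℝ) ≤ 1/3), if_neg (by norm_num : ¬ (1:ℝ) ≤ 2/3), hr0]
    norm_num [Real.toNNReal_one]
  obtain ⟨m, S, hSc, hSim, hSbot, hSside, hStop⟩ :=
    hco r hrp hrjb hrU α hαc hαim hα0 hα1 (F ∪ s₁ '' Set.Icc 0 b)
      (hF.union (isCompact_Icc.image hp1.continuous))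
  have hSside' : ∀ s ∈ Set.Icc (0:ℝ) (m:ℝ),
      S (0, s) = s₁ (a + Real.toNNReal s) ∧ S (1, s) = s₁ (a + Real.toNNReal s) := hSside
  have hbn : b < a + m := by
    have h1 : S (0, (m:ℝ)) = s₁ (a + m) := by
      have := (hSside' (m:ℝ) ⟨m.coe_nonneg, le_refl _⟩).1
      rwa [Real.toNNReal_coe] at this
    have h2 := hStop 0 (by constructor <;> norm_num)
    rw [h1] at h2
    by_contra hc
    push_neg at hc
    exact h2 (Or.inr ⟨a + m, ⟨zero_le, hc⟩, rfl⟩)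
  -- real-valued abbreviations
  have hA0 : (0:ℝ) < a := by exact_mod_cast ha0
  have hB0 : (0:ℝ) < b := by exact_mod_cast hb0
  have hM0 : (0:ℝ) ≤ m := m.coe_nonneg
  have hBN : (b:ℝ) < (a:ℝ) + (m:ℝ) := by exact_mod_cast hbn
  have hAN : (a:ℝ) ≤ (a:ℝ) + (m:ℝ) := by linarith
  have hN0 : (0:ℝ) < (a:ℝ) + (m:ℝ) := by linarith
  -- evaluation lemmas for α
  have hα_eval1 : ∀ u : ℝ, u ≤ 1/3 → α u = γ (3*u) := by
    intro u hu; rw [hαdef]; unfold alphaFn; rw [if_pos hu]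
  have hα_eval2 : ∀ u : ℝ, 1/3 ≤ u → u ≤ 2/3 → α u = s₂ (b * Real.toNNReal (2 - 3*u)) := by
    intro u h1 h2
    rw [hαdef]; unfold alphaFn
    rcases eq_or_lt_of_le h1 with h | h
    · rw [if_pos h.ge]
      rw [← h]
      norm_num [hγ1, Real.toNNReal_one]
    · rw [if_neg (not_le.mpr h), if_pos h2]
  have hα_eval3 : ∀ u : ℝ, 2/3 ≤ u → α u = s₁ (a * Real.toNNReal (3*u - 2)) := by
    intro u h1
    rw [hαdef]; unfold alphaFn
    rw [if_neg (by norm_num; linarith : ¬ u ≤ 1/3)]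
    rcases eq_or_lt_of_le h1 with h | h
    · rw [if_pos h.ge, ← h]
      norm_num [Real.toNNReal_zero, h12]
    · rw [if_neg (not_le.mpr h)]
  -- the path β
  set β : ℝ → Y := betaFn S s₂ γ (m:ℝ) (b:ℝ) ((a:ℝ) + (m:ℝ)) with hβdef
  have hβc : ContinuousOn β (Set.Icc 0 1) := by
    rw [hβdef]; unfold betaFn
    apply glueIcc (c := 1/4) (lo := 0) (hi := 1)
    · apply hSc.comp ((by fun_prop :
        Continuous fun q : ℝ => ((1 - 4*q, (m:ℝ)) : ℝ × ℝ)).continuousOn)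
      intro q hq
      simp only [Set.mem_Icc] at hq
      exact mem_prodIcc (by linarith [hq.2]) (by linarith [hq.1]) hM0 le_rfl
    · apply glueIcc (c := 1/2) (lo := 1/4) (hi := 1)
      · apply hSc.comp ((by fun_prop :
          Continuous fun q : ℝ => (((0:ℝ), (m:ℝ) * (2 - 4*q)) : ℝ × ℝ)).continuousOn)
        intro q hq
        simp only [Set.mem_Icc] at hq
        refine mem_prodIcc le_rfl (by norm_num) ?_ ?_
        · exact mul_nonneg hM0 (by linarith [hq.2])
        · calc (m:ℝ) * (2 - 4*q) ≤ (m:ℝ) * 1 :=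
                mul_le_mul_of_nonneg_left (by linarith [hq.1]) hM0
            _ = (m:ℝ) := by ring
      · apply glueIcc (c := 3/4) (lo := 1/2) (hi := 1)
        · apply hγc.comp ((by fun_prop :
            Continuous fun q : ℝ => 4*q - 2).continuousOn)
          intro q hq
          simp only [Set.mem_Icc] at hq ⊢
          constructor <;> linarith [hq.1, hq.2]
        · exact (hs₂c.comp (continuous_real_toNNReal.comp (by fun_prop))).continuousOn
        · rw [show (4*(3/4:ℝ) - 2) = 1 from by norm_num, hγ1]
          rw [show ((b:ℝ) + (4*(3/4:ℝ) - 3) * (((a:ℝ)+(m:ℝ)) - (b:ℝ))) = (b:ℝ) from by ring]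
          rw [Real.toNNReal_coe]
      · rw [if_pos (by norm_num : (1/2:ℝ) ≤ 3/4)]
        rw [show ((m:ℝ) * (2 - 4*(1/2:ℝ))) = 0 from by ring]
        rw [hSbot 0 ⟨le_rfl, by norm_num⟩, hα_eval1 0 (by norm_num)]
        rw [show (3*(0:ℝ)) = 0 from by ring, show (4*(1/2:ℝ) - 2) = 0 from by norm_num]
    · rw [if_pos (by norm_num : (1/4:ℝ) ≤ 1/2)]
      rw [show (1 - 4*(1/4:ℝ)) = 0 from by norm_num,
        show ((m:ℝ) * (2 - 4*(1/4:ℝ))) = (m:ℝ) from by ring]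
  have hβF : β '' Set.Icc 0 1 ⊆ Fᶜ := by
    rintro y ⟨q, ⟨hq0, hq1⟩, rfl⟩
    rw [hβdef]; unfold betaFn
    split_ifs with h1 h2 h3
    · intro hmem
      exact hStop (1 - 4*q) ⟨by linarith, by linarith⟩ (Or.inl hmem)
    · have harg : (m:ℝ) * (2 - 4*q) ∈ Set.Icc (0:ℝ) (m:ℝ) := by
        constructor
        · nlinarith
        · nlinarith
      rw [(hSside' _ harg).1]
      apply hNF1
      exact lt_of_lt_of_le hNa le_self_add
    · have := (hγmem (4*q - 2) ⟨by linarith, by linarith⟩).2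
      intro hmem
      exact this (Or.inl hmem)
    · apply hNF2
      have hge : (b:ℝ) ≤ (b:ℝ) + (4*q - 3) * (((a:ℝ)+(m:ℝ)) - b) := by nlinarith
      have := (Real.le_toNNReal_iff_coe_le (le_trans b.coe_nonneg hge)).mpr hge
      exact lt_of_lt_of_le hNb this
  have hβ0 : β 0 = s₁ (a + m) := by
    rw [hβdef]; unfold betaFn
    rw [if_pos (by norm_num : (0:ℝ) ≤ 1/4)]
    have h1 : (1 : ℝ) - 4*0 = 1 := by norm_num
    rw [h1]
    have := (hSside' (m:ℝ) ⟨m.coe_nonneg, le_refl _⟩).2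
    rwa [Real.toNNReal_coe] at this
  have hβ1 : β 1 = s₂ (a + m) := by
    rw [hβdef]; unfold betaFn
    rw [if_neg (by norm_num : ¬ (1:ℝ) ≤ 1/4), if_neg (by norm_num : ¬ (1:ℝ) ≤ 1/2),
      if_neg (by norm_num : ¬ (1:ℝ) ≤ 3/4)]
    congr 1
    have h1 : (b:ℝ) + (4*1 - 3) * (((a:ℝ) + (m:ℝ)) - b) = ((a + m : NNReal) : ℝ) := by
      push_cast; ring
    rw [h1, Real.toNNReal_coe]
  -- the domain loop and the model map
  set L : ℝ → ℝ × ℝ := ellFn (a:ℝ) (b:ℝ) ((a:ℝ) + (m:ℝ)) (m:ℝ) with hLdef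
  set Φ : ℝ × ℝ → Y := phiFn S s₂ (b:ℝ) ((a:ℝ) + (m:ℝ)) with hΦdef
  have ht1pos : 0 ≤ (a:ℝ)/(3*((a:ℝ)+(m:ℝ))) := by positivity
  have ht1le : (a:ℝ)/(3*((a:ℝ)+(m:ℝ))) ≤ 1/3 := by
    rw [div_le_iff₀ (by positivity)]
    linarith
  have ht2gt : 2/3 < 1 - (b:ℝ)/(3*((a:ℝ)+(m:ℝ))) := by
    have : (b:ℝ)/(3*((a:ℝ)+(m:ℝ))) < 1/3 := by
      rw [div_lt_iff₀ (by positivity)]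
      linarith
    linarith
  have ht2lt : 1 - (b:ℝ)/(3*((a:ℝ)+(m:ℝ))) < 1 := by
    have : 0 < (b:ℝ)/(3*((a:ℝ)+(m:ℝ))) := by positivity
    linarith
  have hnbne : ((a:ℝ)+(m:ℝ)) - (b:ℝ) ≠ 0 := by linarith
  have hLc : ContinuousOn L (Set.Icc 0 1) := by
    rw [hLdef]; unfold ellFn
    apply glueIcc (c := (a:ℝ)/(3*((a:ℝ)+(m:ℝ)))) (lo := 0) (hi := 1)
    · exact (by fun_prop : Continuous fun t : ℝ =>
        (((((a:ℝ)+(m:ℝ))*t/(a:ℝ) - 1/3 : ℝ), (0:ℝ)) : ℝ × ℝ)).continuousOn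
    · apply glueIcc (c := (1/3 : ℝ))
      · exact (by fun_prop : Continuous fun t : ℝ =>
          (((0:ℝ), (3*((a:ℝ)+(m:ℝ))*t - (a:ℝ) : ℝ)) : ℝ × ℝ)).continuousOn
      · apply glueIcc (c := (5/12 : ℝ))
        · exact (by fun_prop : Continuous fun t : ℝ =>
            (((-4*(3*t-1) : ℝ), ((m:ℝ) : ℝ)) : ℝ × ℝ)).continuousOn
        · apply glueIcc (c := (1/2 : ℝ))
          · exact (by fun_prop : Continuous fun t : ℝ =>
              (((-1 : ℝ), ((m:ℝ) * (6 - 12*t) : ℝ)) : ℝ × ℝ)).continuousOn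
          · apply glueIcc (c := (7/12 : ℝ))
            · exact (by fun_prop : Continuous fun t : ℝ =>
                (((4*t - 3 : ℝ), (0:ℝ)) : ℝ × ℝ)).continuousOn
            · apply glueIcc (c := (2/3 : ℝ))
              · exact (by fun_prop : Continuous fun t : ℝ =>
                  (((-2/3 : ℝ), (7 - 12*t : ℝ)) : ℝ × ℝ)).continuousOn
              · apply glueIcc (c := (1 - (b:ℝ)/(3*((a:ℝ)+(m:ℝ))) : ℝ))
                · exact (by fun_prop : Continuous fun t : ℝ =>
                    (((-2/3 : ℝ), (((b:ℝ) - ((a:ℝ)+(m:ℝ))*(3 - 3*t))/(((a:ℝ)+(m:ℝ)) - (b:ℝ)) : ℝ)) : ℝ × ℝ)).continuousOn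
                · exact (by fun_prop : Continuous fun t : ℝ =>
                    (((-((a:ℝ)+(m:ℝ))*(1-t)/(b:ℝ) - 1/3 : ℝ), (0:ℝ)) : ℝ × ℝ)).continuousOn
                · -- match at t₂
                  have e1 : ((b:ℝ) - ((a:ℝ)+(m:ℝ))*(3 - 3*(1 - (b:ℝ)/(3*((a:ℝ)+(m:ℝ))))))/(((a:ℝ)+(m:ℝ)) - (b:ℝ)) = 0 := by
                    rw [div_eq_zero_iff]
                    left
                    field_simp
                    ring
                  have e2 : -((a:ℝ)+(m:ℝ))*(1-(1 - (b:ℝ)/(3*((a:ℝ)+(m:ℝ)))))/(b:ℝ) - 1/3 = -2/3 := by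
                    field_simp
                    ring
                  rw [e1, e2]
              · -- match at 2/3
                rw [if_pos (le_of_lt ht2gt)]
                have e1 : (7 - 12*(2/3 : ℝ)) = -1 := by norm_num
                have e2 : ((b:ℝ) - ((a:ℝ)+(m:ℝ))*(3 - 3*(2/3 : ℝ)))/(((a:ℝ)+(m:ℝ)) - (b:ℝ)) = -1 := by
                  rw [div_eq_iff hnbne]
                  ring
                rw [e1, e2]
            · -- match at 7/12
              rw [if_pos (by norm_num : (7/12 : ℝ) ≤ 2/3)]
              norm_num
          · -- match at 1/2
            rw [if_pos (by norm_num : (1/2 : ℝ) ≤ 7/12)]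
            norm_num
        · -- match at 5/12
          rw [if_pos (by norm_num : (5/12 : ℝ) ≤ 1/2)]
          norm_num
      · -- match at 1/3
        rw [if_pos (by norm_num : (1/3 : ℝ) ≤ 5/12)]
        have e1 : (3*((a:ℝ)+(m:ℝ))*(1/3) - (a:ℝ)) = (m:ℝ) := by ring
        have e2 : (-4*(3*(1/3 : ℝ)-1)) = 0 := by norm_num
        rw [e1, e2]
    · -- match at t₁
      rw [if_pos ht1le]
      have e1 : ((a:ℝ)+(m:ℝ))*((a:ℝ)/(3*((a:ℝ)+(m:ℝ))))/(a:ℝ) - 1/3 = 0 := by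
        field_simp
        ring
      have e2 : 3*((a:ℝ)+(m:ℝ))*((a:ℝ)/(3*((a:ℝ)+(m:ℝ)))) - (a:ℝ) = 0 := by
        field_simp
        ring
      rw [e1, e2]
  have hLmem : ∀ t ∈ Set.Icc (0:ℝ) 1, L t ∈ msetFn (m:ℝ) := by
    intro t ht
    obtain ⟨htl, htr⟩ := ht
    rw [hLdef]
    rcases le_or_gt t ((a:ℝ)/(3*((a:ℝ)+(m:ℝ)))) with h1 | h1
    · rw [ell_eval1 h1]
      have hx0 : 0 ≤ ((a:ℝ)+(m:ℝ))*t/(a:ℝ) := by positivity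
      have hxu : ((a:ℝ)+(m:ℝ))*t ≤ (a:ℝ)/3 := by
        have h2 := mul_le_mul_of_nonneg_left h1 (le_of_lt hN0)
        have h3 : ((a:ℝ)+(m:ℝ)) * ((a:ℝ)/(3*((a:ℝ)+(m:ℝ)))) = (a:ℝ)/3 := by
          field_simp
        linarith
      have hxu' : ((a:ℝ)+(m:ℝ))*t/(a:ℝ) ≤ 1/3 := by
        rw [div_le_iff₀ hA0]
        linarith
      exact mem_mset_rect (by linarith) (by linarith) le_rfl hM0
    · have h1' : (a:ℝ) < t * (3*((a:ℝ)+(m:ℝ))) := (div_lt_iff₀ (by positivity)).mp h1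
      rcases le_or_gt t (1/3 : ℝ) with h2 | h2
      · rw [ell_eval2 (not_le.mpr h1) h2]
        exact mem_mset_rect (by norm_num) le_rfl (by nlinarith) (by nlinarith)
      · rcases le_or_gt t (5/12 : ℝ) with h3 | h3
        · rw [ell_eval3 (not_le.mpr h1) (not_le.mpr h2) h3]
          exact mem_mset_rect (by linarith) (by linarith) hM0 le_rfl
        · rcases le_or_gt t (1/2 : ℝ) with h4 | h4
          · rw [ell_eval4 (not_le.mpr h1) (not_le.mpr h2) (not_le.mpr h3) h4]
            refine mem_mset_rect (by norm_num) (by norm_num) ?_ ?_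
            · exact mul_nonneg hM0 (by linarith)
            · calc (m:ℝ) * (6 - 12*t) ≤ (m:ℝ) * 1 :=
                  mul_le_mul_of_nonneg_left (by linarith) hM0
                _ = (m:ℝ) := by ring
          · rcases le_or_gt t (7/12 : ℝ) with h5 | h5
            · rw [ell_eval5 (not_le.mpr h1) (not_le.mpr h2) (not_le.mpr h3)
                (not_le.mpr h4) h5]
              exact mem_mset_rect (by linarith) (by linarith) le_rfl hM0
            · rcases le_or_gt t (2/3 : ℝ) with h6 | h6
              · rw [ell_eval6 (not_le.mpr h1) (not_le.mpr h2) (not_le.mpr h3)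
                  (not_le.mpr h4) (not_le.mpr h5) h6]
                exact mem_mset_wh (by linarith) (by linarith)
              · have hden : (0:ℝ) < ((a:ℝ)+(m:ℝ)) - (b:ℝ) := by linarith
                rcases le_or_gt t (1 - (b:ℝ)/(3*((a:ℝ)+(m:ℝ)))) with h7 | h7
                · rw [ell_eval7 (not_le.mpr h1) (not_le.mpr h2) (not_le.mpr h3)
                    (not_le.mpr h4) (not_le.mpr h5) (not_le.mpr h6) h7]
                  have hnum1 : (b:ℝ) ≤ ((a:ℝ)+(m:ℝ))*(3-3*t) := by
                    have h8 := (div_le_iff₀ (by positivity : (0:ℝ) < 3*((a:ℝ)+(m:ℝ)))).mp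
                      (by linarith : (b:ℝ)/(3*((a:ℝ)+(m:ℝ))) ≤ 1 - t)
                    nlinarith
                  have hnum2 : ((a:ℝ)+(m:ℝ))*(3-3*t) ≤ ((a:ℝ)+(m:ℝ)) := by nlinarith
                  apply mem_mset_wh
                  · rw [le_div_iff₀ hden]
                    nlinarith
                  · exact div_nonpos_of_nonpos_of_nonneg (by linarith) (by linarith)
                · rw [ell_eval8 (not_le.mpr h1) (not_le.mpr h2) (not_le.mpr h3)
                    (not_le.mpr h4) (not_le.mpr h5) (not_le.mpr h6) (not_le.mpr h7)]
                  have hb3 : ((a:ℝ)+(m:ℝ))*(1-t) < (b:ℝ)/3 := by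
                    have h8 := (lt_div_iff₀ (by positivity : (0:ℝ) < 3*((a:ℝ)+(m:ℝ)))).mp
                      (by linarith : 1 - t < (b:ℝ)/(3*((a:ℝ)+(m:ℝ))))
                    nlinarith
                  have hw0 : 0 ≤ ((a:ℝ)+(m:ℝ))*(1-t)/(b:ℝ) :=
                    div_nonneg (by nlinarith) hB0.le
                  have hw1 : ((a:ℝ)+(m:ℝ))*(1-t)/(b:ℝ) < 1/3 := by
                    rw [div_lt_iff₀ hB0]; nlinarith
                  have hwx : -((a:ℝ)+(m:ℝ))*(1-t)/(b:ℝ)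
                      = -(((a:ℝ)+(m:ℝ))*(1-t)/(b:ℝ)) := by ring
                  refine mem_mset_rect ?_ ?_ le_rfl hM0
                  · rw [hwx]; linarith
                  · rw [hwx]; linarith
  have hstar : ∀ z ∈ msetFn (m:ℝ), ∀ u ∈ Set.Icc (0:ℝ) 1,
      ((1-u) • z + u • ((-2/3:ℝ), (0:ℝ))) ∈ msetFn (m:ℝ) := by
    rintro ⟨x, y⟩ hz u hu
    simp only [msetFn, Set.mem_union, Set.mem_prod, Set.mem_Icc, Set.mem_singleton_iff] at hz
    obtain ⟨hu0, hu1⟩ := hu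
    have hsm : ((1-u) • ((x:ℝ), y) + u • ((-2/3:ℝ), (0:ℝ)))
        = ((1-u)*x + u*(-2/3), (1-u)*y) := by
      simp [Prod.ext_iff, Prod.smul_def, smul_eq_mul]
    rw [hsm]
    rcases hz with ⟨⟨hx1, hx2⟩, ⟨hy1, hy2⟩⟩ | ⟨hx, hy1, hy2⟩
    · apply mem_mset_rect
      · nlinarith
      · nlinarith
      · nlinarith
      · nlinarith
    · subst hx
      have : (1-u)*(-2/3 : ℝ) + u*(-2/3) = -2/3 := by ring
      rw [this]
      apply mem_mset_wh
      · nlinarith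
      · nlinarith
  have hψc : Continuous (fun p : ℝ × ℝ =>
      s₂ (Real.toNNReal ((b:ℝ) - p.2 * (((a:ℝ)+(m:ℝ)) - (b:ℝ))))) :=
    hs₂c.comp (continuous_real_toNNReal.comp (by fun_prop))
  have hΦc : ContinuousOn Φ (msetFn (m:ℝ)) := by
    rw [hΦdef]
    unfold msetFn
    apply glueClosed (isClosed_Icc.prod isClosed_Icc) (isClosed_singleton.prod isClosed_Icc)
    · apply ContinuousOn.congr (f := fun p : ℝ × ℝ => S (p.1 + 1, p.2))
      · apply hSc.comp ((by fun_prop :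
          Continuous fun p : ℝ × ℝ => ((p.1 + 1, p.2) : ℝ × ℝ)).continuousOn)
        rintro ⟨x, y⟩ hp
        simp only [Set.mem_prod, Set.mem_Icc] at hp
        exact mem_prodIcc (by linarith [hp.1.1]) (by linarith [hp.1.2]) hp.2.1 hp.2.2
      · rintro ⟨x, y⟩ hp
        simp only [Set.mem_prod, Set.mem_Icc] at hp
        exact phi_pos _ _ _ _ _ _ hp.2.1
    · apply ContinuousOn.congr (f := fun p : ℝ × ℝ =>
        s₂ (Real.toNNReal ((b:ℝ) - p.2 * (((a:ℝ)+(m:ℝ)) - (b:ℝ)))))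
      · exact hψc.continuousOn
      · rintro ⟨x, y⟩ hp
        simp only [Set.mem_prod, Set.mem_Icc, Set.mem_singleton_iff] at hp
        obtain ⟨hx, hy1, hy2⟩ := hp
        subst hx
        rcases lt_or_ge y 0 with hy | hy
        · exact phi_neg _ _ _ _ _ _ hy
        · have hy0 : y = 0 := le_antisymm hy2 hy
          subst hy0
          rw [phi_pos _ _ _ _ _ _ le_rfl]
          rw [show ((-2/3 : ℝ) + 1) = 1/3 from by norm_num]
          rw [hSbot (1/3) ⟨by norm_num, by norm_num⟩, hα_eval1 (1/3) le_rfl]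
          rw [show (3*(1/3:ℝ)) = 1 from by norm_num, hγ1]
          norm_num
  have hΦC₀ : ∀ z ∈ msetFn (m:ℝ), Φ z ∈ C₀ᶜ := by
    rintro ⟨x, y⟩ hz
    simp only [msetFn, Set.mem_union, Set.mem_prod, Set.mem_Icc, Set.mem_singleton_iff] at hz
    rcases hz with ⟨⟨hx1, hx2⟩, ⟨hy1, hy2⟩⟩ | ⟨hx, hy1, hy2⟩
    · rw [hΦdef, phi_pos _ _ _ _ _ _ hy1]
      exact hSim ⟨(x+1, y), ⟨⟨show (0:ℝ) ≤ x+1 by linarith, show x+1 ≤ (1:ℝ) by linarith⟩,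
        ⟨hy1, hy2⟩⟩, rfl⟩
    · subst hx
      rcases lt_or_ge y 0 with hy | hy
      · rw [hΦdef, phi_neg _ _ _ _ _ _ hy]
        exact haux s₂ hp2 hjb2 hr2 _
      · have hy0 : y = 0 := le_antisymm hy2 hy
        subst hy0
        rw [hΦdef, phi_pos _ _ _ _ _ _ le_rfl]
        exact hSim ⟨(-2/3+1, 0), ⟨⟨by norm_num, by norm_num⟩, ⟨le_rfl, hM0⟩⟩, rfl⟩
  have hcast : ((a + m : NNReal) : ℝ) = (a:ℝ) + (m:ℝ) := by push_cast; ring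
  have hmain : ∀ t ∈ Set.Icc (0:ℝ) 1, Φ (L t) = concatLoop s₁ s₂ (a+m) (a+m) β t := by
    intro t ht
    obtain ⟨htl, htr⟩ := ht
    rw [hLdef, hΦdef]
    rcases le_or_gt t ((a:ℝ)/(3*((a:ℝ)+(m:ℝ)))) with h1 | h1
    · -- piece 1 : bottom-right of the rectangle, s₁ on [0,a]
      rw [ell_eval1 h1, phi_pos _ _ _ _ _ _ le_rfl,
        concat_eval1 s₁ s₂ (a+m) (a+m) β t (le_trans h1 ht1le)]
      have hx0 : 0 ≤ ((a:ℝ)+(m:ℝ))*t/(a:ℝ) := by positivity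
      have hxu : ((a:ℝ)+(m:ℝ))*t ≤ (a:ℝ)/3 := by
        have h2 := mul_le_mul_of_nonneg_left h1 (le_of_lt hN0)
        have h3 : ((a:ℝ)+(m:ℝ)) * ((a:ℝ)/(3*((a:ℝ)+(m:ℝ)))) = (a:ℝ)/3 := by
          field_simp
        linarith
      have hxu' : ((a:ℝ)+(m:ℝ))*t/(a:ℝ) ≤ 1/3 := by
        rw [div_le_iff₀ hA0]
        linarith
      rw [hSbot (((a:ℝ)+(m:ℝ))*t/(a:ℝ) - 1/3 + 1) ⟨by linarith, by linarith⟩]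
      rw [hα_eval3 _ (by linarith)]
      congr 1
      rw [← cmulNN, ← cmulNN, hcast]
      congr 1
      field_simp
      ring
    · have h1' : (a:ℝ) < t * (3*((a:ℝ)+(m:ℝ))) := (div_lt_iff₀ (by positivity)).mp h1
      rcases le_or_gt t (1/3 : ℝ) with h2 | h2
      · -- piece 2 : right edge, s₁ on [a, n]
        rw [ell_eval2 (not_le.mpr h1) h2,
          phi_pos _ _ _ _ _ _ (by nlinarith : (0:ℝ) ≤ 3*((a:ℝ)+(m:ℝ))*t - (a:ℝ)),
          concat_eval1 s₁ s₂ (a+m) (a+m) β t h2]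
        rw [show ((0:ℝ)+1) = 1 from by norm_num]
        rw [(hSside' (3*((a:ℝ)+(m:ℝ))*t - (a:ℝ)) ⟨by nlinarith, by nlinarith⟩).2]
        congr 1
        rw [addtoNN a _ (by nlinarith)]
        rw [← cmulNN, hcast]
        congr 1
        ring
      · rcases le_or_gt t (5/12 : ℝ) with h3 | h3
        · -- piece 3 : top edge, λ⁻¹
          rw [ell_eval3 (not_le.mpr h1) (not_le.mpr h2) h3, phi_pos _ _ _ _ _ _ hM0,
            concat_eval2 s₁ s₂ (a+m) (a+m) β t (not_le.mpr h2) (by linarith),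
            hβdef, beta_eval1 _ _ _ _ _ _ _ (by linarith : 3*t - 1 ≤ 1/4)]
          exact congrArg S (Prod.ext_iff.mpr
            ⟨show (-4*(3*t-1)+1 : ℝ) = 1 - 4*(3*t-1) from by ring, rfl⟩)
        · rcases le_or_gt t (1/2 : ℝ) with h4 | h4
          · -- piece 4 : left edge, s₁ from n down to a
            rw [ell_eval4 (not_le.mpr h1) (not_le.mpr h2) (not_le.mpr h3) h4,
              phi_pos _ _ _ _ _ _ (mul_nonneg hM0 (by linarith)),
              concat_eval2 s₁ s₂ (a+m) (a+m) β t (not_le.mpr h2) (by linarith),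
              hβdef, beta_eval2 _ _ _ _ _ _ _ (not_le.mpr (by linarith)) (by linarith)]
            exact congrArg S (Prod.ext_iff.mpr
              ⟨show ((-1:ℝ)+1) = 0 from by ring,
               show ((m:ℝ)*(6-12*t)) = (m:ℝ)*(2-4*(3*t-1)) from by ring⟩)
          · rcases le_or_gt t (7/12 : ℝ) with h5 | h5
            · -- piece 5 : bottom edge, γ
              rw [ell_eval5 (not_le.mpr h1) (not_le.mpr h2) (not_le.mpr h3)
                  (not_le.mpr h4) h5,
                phi_pos _ _ _ _ _ _ le_rfl,
                concat_eval2 s₁ s₂ (a+m) (a+m) β t (not_le.mpr h2) (by linarith),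
                hβdef, beta_eval3 _ _ _ _ _ _ _ (not_le.mpr (by linarith))
                  (not_le.mpr (by linarith)) (by linarith)]
              rw [show ((4*t-3:ℝ)+1) = 4*t-2 from by ring]
              rw [hSbot (4*t-2) ⟨by linarith, by linarith⟩, hα_eval1 _ (by linarith)]
              congr 1
              ring
            · rcases le_or_gt t (2/3 : ℝ) with h6 | h6
              · -- piece 6 : whisker downward, s₂ from b up to n
                rw [ell_eval6 (not_le.mpr h1) (not_le.mpr h2) (not_le.mpr h3)
                    (not_le.mpr h4) (not_le.mpr h5) h6,
                  phi_neg _ _ _ _ _ _ (by linarith : (7 - 12*t : ℝ) < 0),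
                  concat_eval2 s₁ s₂ (a+m) (a+m) β t (not_le.mpr h2) h6,
                  hβdef, beta_eval4 _ _ _ _ _ _ _ (not_le.mpr (by linarith))
                    (not_le.mpr (by linarith)) (not_le.mpr (by linarith))]
                congr 1
                congr 1
                ring
              · have hden : (0:ℝ) < ((a:ℝ)+(m:ℝ)) - (b:ℝ) := by linarith
                rcases le_or_gt t (1 - (b:ℝ)/(3*((a:ℝ)+(m:ℝ)))) with h7 | h7
                · -- piece 7 : whisker upward, s₂ from n down to b
                  rw [ell_eval7 (not_le.mpr h1) (not_le.mpr h2) (not_le.mpr h3)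
                      (not_le.mpr h4) (not_le.mpr h5) (not_le.mpr h6) h7,
                    concat_eval3 s₁ s₂ (a+m) (a+m) β t
                      (not_le.mpr (by linarith)) (not_le.mpr h6)]
                  rcases lt_or_eq_of_le h7 with h7' | h7'
                  · have hkey : (b:ℝ) < ((a:ℝ)+(m:ℝ))*(3-3*t) := by
                      have h8 := (div_lt_iff₀ (by positivity : (0:ℝ) < 3*((a:ℝ)+(m:ℝ)))).mp
                        (by linarith : (b:ℝ)/(3*((a:ℝ)+(m:ℝ))) < 1 - t)
                      nlinarith
                    rw [phi_neg _ _ _ _ _ _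
                      (div_neg_of_neg_of_pos (by linarith) hden)]
                    congr 1
                    rw [← cmulNN, hcast]
                    congr 1
                    field_simp
                    ring
                  · have hval : ((a:ℝ)+(m:ℝ))*(3-3*t) = (b:ℝ) := by
                      rw [h7']
                      field_simp
                      ring
                    have hy0 : ((b:ℝ) - ((a:ℝ)+(m:ℝ))*(3 - 3*t))/(((a:ℝ)+(m:ℝ)) - (b:ℝ)) = 0 := by
                      rw [hval]
                      simp
                    rw [hy0, phi_pos _ _ _ _ _ _ le_rfl]
                    rw [show ((-2/3:ℝ)+1) = 1/3 from by norm_num]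
                    rw [hSbot (1/3) ⟨by norm_num, by norm_num⟩, hα_eval1 _ le_rfl]
                    rw [show (3*(1/3:ℝ)) = 1 from by norm_num, hγ1]
                    rw [← cmulNN, hcast, hval, Real.toNNReal_coe]
                · -- piece 8 : bottom edge, s₂ from b down to 0
                  rw [ell_eval8 (not_le.mpr h1) (not_le.mpr h2) (not_le.mpr h3)
                      (not_le.mpr h4) (not_le.mpr h5) (not_le.mpr h6) (not_le.mpr h7),
                    phi_pos _ _ _ _ _ _ le_rfl,
                    concat_eval3 s₁ s₂ (a+m) (a+m) β t
                      (not_le.mpr (by linarith)) (not_le.mpr h6)]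
                  have hb3 : ((a:ℝ)+(m:ℝ))*(1-t) < (b:ℝ)/3 := by
                    have h8 := (lt_div_iff₀ (by positivity : (0:ℝ) < 3*((a:ℝ)+(m:ℝ)))).mp
                      (by linarith : 1 - t < (b:ℝ)/(3*((a:ℝ)+(m:ℝ))))
                    nlinarith
                  have hw0 : 0 ≤ ((a:ℝ)+(m:ℝ))*(1-t)/(b:ℝ) :=
                    div_nonneg (by nlinarith) hB0.le
                  have hw1 : ((a:ℝ)+(m:ℝ))*(1-t)/(b:ℝ) < 1/3 := by
                    rw [div_lt_iff₀ hB0]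
                    nlinarith
                  rw [show (-((a:ℝ)+(m:ℝ))*(1-t)/(b:ℝ) - 1/3 + 1 : ℝ)
                    = 2/3 - ((a:ℝ)+(m:ℝ))*(1-t)/(b:ℝ) from by ring]
                  have hmem8 : (2/3 - ((a:ℝ)+(m:ℝ))*(1-t)/(b:ℝ)) ∈ Set.Icc (0:ℝ) 1 :=
                    Set.mem_Icc.mpr ⟨by linarith, by linarith⟩
                  rw [hSbot (2/3 - ((a:ℝ)+(m:ℝ))*(1-t)/(b:ℝ)) hmem8]
                  rw [hα_eval2 (2/3 - ((a:ℝ)+(m:ℝ))*(1-t)/(b:ℝ)) (by linarith) (by linarith)]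
                  congr 1
                  rw [← cmulNN, ← cmulNN, hcast]
                  congr 1
                  field_simp
                  ring
  have hL0 : L 0 = (-1/3, 0) := by
    rw [hLdef, ell_eval1 (by linarith : (0:ℝ) ≤ (a:ℝ)/(3*((a:ℝ)+(m:ℝ))))]
    norm_num
  have hL1 : L 1 = (-1/3, 0) := by
    rw [hLdef, ell_eval8 (by linarith) (by norm_num) (by norm_num) (by norm_num)
      (by norm_num) (by norm_num) (by linarith)]
    norm_num
  -- assemble
  refine ⟨a + m, β, hβc, hβF, hβ0, hβ1,
    (fun p : ℝ × ℝ => Φ ((1 - p.2) • L p.1 + p.2 • ((-2/3:ℝ), (0:ℝ)))), ?_, ?_, ?_, ?_, ?_⟩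
  · -- continuity
    have hGc : ContinuousOn
        (fun p : ℝ × ℝ => (1 - p.2) • L p.1 + p.2 • ((-2/3:ℝ), (0:ℝ)))
        (Set.Icc 0 1 ×ˢ Set.Icc 0 1) := by
      apply ContinuousOn.add
      · exact ((continuous_const.sub continuous_snd).continuousOn).smul
          (hLc.comp continuous_fst.continuousOn (fun p hp => hp.1))
      · exact (continuous_snd.smul continuous_const).continuousOn
    exact hΦc.comp hGc (fun p hp => hstar (L p.1) (hLmem p.1 hp.1) p.2 hp.2)
  · -- image in C₀ᶜ
    rintro y ⟨p, hp, rfl⟩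
    exact hΦC₀ _ (hstar (L p.1) (hLmem p.1 hp.1) p.2 hp.2)
  · -- bottom edge
    intro t ht
    show Φ (((1:ℝ) - (0:ℝ)) • L t + (0:ℝ) • ((-2/3:ℝ), (0:ℝ))) = _
    have h : ((1:ℝ) - (0:ℝ)) • L t + (0:ℝ) • ((-2/3:ℝ), (0:ℝ)) = L t := by simp
    rw [h]
    exact hmain t ht
  · -- top edge constant
    intro t ht
    show Φ (((1:ℝ) - (1:ℝ)) • L t + (1:ℝ) • ((-2/3:ℝ), (0:ℝ))) =
      Φ (((1:ℝ) - (1:ℝ)) • L 0 + (1:ℝ) • ((-2/3:ℝ), (0:ℝ)))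
    simp
  · -- side edges agree
    intro u hu
    show Φ (((1:ℝ) - u) • L 0 + u • ((-2/3:ℝ), (0:ℝ))) =
      Φ (((1:ℝ) - u) • L 1 + u • ((-2/3:ℝ), (0:ℝ)))
    rw [hL0, hL1]
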